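/- arXiv:1602.02851 — 2 statements merged into one kernel-verified Lean document; each statement's English description precedes it below -/
import Mathlib

section
/- Let R_1 and R_2 be circulant v × v matrices with entries ±1. The pair (A,B) of subsets of Z_v determined by the positions of -1's in the first rows of R_1 and R_2 is a 2-{v;r,k;λ} supplementary difference set if and only if R_1 R_1^T + R_2 R_2^T = 4(r+k-λ) I + 2(v - 2(r+k-λ)) J, where I is the identity and J the all-ones v × v matrix. -/
def P {v : ℕ} (A : Finset (ZMod v)) (i : ZMod v) : ℕ :=
  ((A ×ˢ A).filter (fun p => p.2 - p.1 = i)).card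

def IsSDS {v : ℕ} (A B : Finset (ZMod v)) (l : ℕ) : Prop :=
  ∀ i : ZMod v, i ≠ 0 → P A i + P B i = l

lemma sum_ind {v : ℕ} [NeZero v] (A : Finset (ZMod v)) :
    ∑ m : ZMod v, (if m ∈ A then (1:ℤ) else 0) = A.card := by
  simp [Finset.sum_ite_mem]

lemma sum_ind_shift {v : ℕ} [NeZero v] (A : Finset (ZMod v)) (i : ZMod v) :
    ∑ m : ZMod v, (if m - i ∈ A then (1:ℤ) else 0) = A.card := by
  rw [← sum_ind A]
  exact Fintype.sum_equiv (Equiv.subRight i) _ _ (fun m => rfl)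

lemma P_count {v : ℕ} [NeZero v] (A : Finset (ZMod v)) (d : ZMod v) :
    ∑ m : ZMod v, (if m ∈ A ∧ m + d ∈ A then (1:ℤ) else 0) = P A d := by
  rw [Finset.sum_boole]
  simp only [P]
  norm_cast
  apply Finset.card_nbij' (fun m => (m, m + d)) (fun p => p.1)
  · intro m hm
    simp only [Finset.mem_coe, Finset.mem_filter, Finset.mem_univ, true_and] at hm
    simp [Finset.mem_filter, Finset.mem_product, hm.1, hm.2]
  · intro p hp
    simp only [Finset.mem_coe, Finset.mem_filter, Finset.mem_product] at hp
    have hpd : p.1 + d = p.2 := by linear_combination -hp.2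
    simp [hp.1.1, hpd, hp.1.2]
  · intro m hm; rfl
  · intro p hp
    simp only [Finset.mem_coe, Finset.mem_filter, Finset.mem_product] at hp
    have : p.1 + d = p.2 := by have := hp.2; linear_combination -this
    simp [this]

lemma key {v : ℕ} [NeZero v] (A : Finset (ZMod v)) (i j : ZMod v) :
    ∑ m : ZMod v, (if m - i ∈ A then (-1:ℤ) else 1) * (if m - j ∈ A then (-1:ℤ) else 1)
      = v - 4 * A.card + 4 * P A (i - j) := by
  have step : ∀ m : ZMod v,
      (if m - i ∈ A then (-1:ℤ) else 1) * (if m - j ∈ A then (-1:ℤ) else 1)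
      = 1 - 2 * (if m - i ∈ A then (1:ℤ) else 0) - 2 * (if m - j ∈ A then (1:ℤ) else 0)
        + 4 * (if (m - i ∈ A ∧ (m - i) + (i - j) ∈ A) then (1:ℤ) else 0) := by
    intro m
    have : m - i + (i - j) = m - j := by ring
    rw [this]
    by_cases h1 : m - i ∈ A <;> by_cases h2 : m - j ∈ A <;> simp [h1, h2]
  simp only [step]
  rw [Finset.sum_add_distrib, Finset.sum_sub_distrib, Finset.sum_sub_distrib,
    ← Finset.mul_sum, ← Finset.mul_sum, ← Finset.mul_sum, sum_ind_shift, sum_ind_shift]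
  have : ∑ m : ZMod v, (if (m - i ∈ A ∧ (m - i) + (i - j) ∈ A) then (1:ℤ) else 0)
      = ∑ m : ZMod v, (if (m ∈ A ∧ m + (i - j) ∈ A) then (1:ℤ) else 0) :=
    Fintype.sum_equiv (Equiv.subRight i) _ _ (fun m => rfl)
  rw [this, P_count]
  simp [Finset.card_univ]
  ring

open Matrix in
theorem stmt10 (v r k l : ℕ) [NeZero v] (hv : 2 < v) (A B : Finset (ZMod v))
    (hA : A.card = r) (hB : B.card = k) :
    IsSDS A B l ↔
      (Matrix.of fun i j : ZMod v => if j - i ∈ A then (-1 : ℤ) else 1) *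
          (Matrix.of fun i j : ZMod v => if j - i ∈ A then (-1 : ℤ) else 1)ᵀ +
        (Matrix.of fun i j : ZMod v => if j - i ∈ B then (-1 : ℤ) else 1) *
          (Matrix.of fun i j : ZMod v => if j - i ∈ B then (-1 : ℤ) else 1)ᵀ =
      (4 * ((r : ℤ) + k - l)) • (1 : Matrix (ZMod v) (ZMod v) ℤ) +
        (2 * ((v : ℤ) - 2 * ((r : ℤ) + k - l))) • Matrix.of (fun _ _ => (1 : ℤ)) := by
  have hP0 : ∀ (C : Finset (ZMod v)), P C 0 = C.card := by
    intro C
    rw [P]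
    apply Finset.card_nbij' (fun p => p.1) (fun m => (m, m))
    · intro p hp
      simp only [Finset.mem_coe, Finset.mem_filter, Finset.mem_product] at hp
      exact hp.1.1
    · intro m hm; simp [Finset.mem_filter, Finset.mem_coe.mp hm]
    · intro p hp
      simp only [Finset.mem_coe, Finset.mem_filter, Finset.mem_product] at hp
      have : p.1 = p.2 := by have := hp.2; linear_combination -this
      exact Prod.ext_iff.mpr ⟨rfl, this⟩
    · intro m hm; rfl
  have entry : ∀ i j : ZMod v,
      ((Matrix.of fun i j : ZMod v => if j - i ∈ A then (-1 : ℤ) else 1) *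
          (Matrix.of fun i j : ZMod v => if j - i ∈ A then (-1 : ℤ) else 1)ᵀ +
        (Matrix.of fun i j : ZMod v => if j - i ∈ B then (-1 : ℤ) else 1) *
          (Matrix.of fun i j : ZMod v => if j - i ∈ B then (-1 : ℤ) else 1)ᵀ) i j
      = 2 * v - 4 * r - 4 * k + 4 * (P A (i - j) + P B (i - j)) := by
    intro i j
    simp only [Matrix.add_apply, Matrix.mul_apply, Matrix.transpose_apply, Matrix.of_apply]
    rw [key A i j, key B i j, hA, hB]
    push_cast
    ring
  constructor
  · intro h
    ext i j
    rw [entry i j]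
    simp only [Matrix.add_apply, Matrix.smul_apply, Matrix.one_apply, Matrix.of_apply,
      smul_eq_mul]
    by_cases hij : i = j
    · subst hij
      simp only [if_pos rfl, sub_self, hP0, hA, hB, mul_one]
      push_cast
      ring
    · have hd : i - j ≠ 0 := sub_ne_zero.mpr hij
      have hl : (P A (i - j) : ℤ) + P B (i - j) = l := by exact_mod_cast h (i - j) hd
      rw [hl, if_neg hij]
      push_cast
      ring
  · intro h d hd
    have := congrFun (congrFun h d) 0
    rw [entry d 0] at this
    simp only [Matrix.add_apply, Matrix.smul_apply, Matrix.one_apply, Matrix.of_apply,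
      smul_eq_mul, sub_zero] at this
    rw [if_neg hd, mul_zero, zero_add, mul_one] at this
    omega
end

section
/- Let p be a prime with p ≡ 3 (mod 4) and let Q be the set of nonzero quadratic residues modulo p. Then the pair (Z_p \ (Q ∪ {0}), ∅) is a skew-symmetric 2-{p; (p-1)/2, 0; (p-3)/4} supplementary difference set: writing A for the set of nonresidues, one has 0 ∉ A, i ∈ A implies -i ∉ A, |A| = (p-1)/2, and P_A(i) = (p-3)/4 for every nonzero i ∈ Z_p. -/
open scoped Classical in
theorem stmt13 (p : ℕ) [Fact (Nat.Prime p)] (hp4 : p % 4 = 3)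
    (A : Finset (ZMod p))
    (hAdef : A = Finset.univ.filter (fun i : ZMod p => i ≠ 0 ∧ ¬ IsSquare i)) :
    (0 : ZMod p) ∉ A ∧ (∀ i : ZMod p, i ∈ A → -i ∉ A) ∧
      A.card = (p - 1) / 2 ∧
      (∀ i : ZMod p, i ≠ 0 → P A i = (p - 3) / 4) := by
  classical
  have hp : p.Prime := Fact.out
  have hp2 : p ≠ 2 := by omega
  have hp3 : 3 ≤ p := by
    have := hp.two_le; omega
  have hchar : ringChar (ZMod p) ≠ 2 := by
    rw [ZMod.ringChar_zmod_n]; exact hp2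
  set χ := quadraticChar (ZMod p) with hχdef
  have hcard : Fintype.card (ZMod p) = p := ZMod.card p
  have hneg1 : χ (-1) = -1 := by
    rw [hχdef, quadraticChar_neg_one_iff_not_isSquare, FiniteField.isSquare_neg_one_iff, hcard]
    simp [hp4]
  have hmemA : ∀ x : ZMod p, x ∈ A ↔ χ x = -1 := by
    intro x
    rw [hAdef, Finset.mem_filter]
    constructor
    · rintro ⟨-, -, h⟩; exact quadraticChar_neg_one_iff_not_isSquare.mpr h
    · intro h
      have hx0 : x ≠ 0 := by
        rintro rfl; simp [hχdef] at h
      exact ⟨Finset.mem_univ x, hx0, quadraticChar_neg_one_iff_not_isSquare.mp h⟩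
  have hχneg : ∀ x : ZMod p, χ (-x) = - χ x := by
    intro x
    rw [show (-x) = (-1) * x by ring, map_mul, hneg1]; ring
  have h0A : (0 : ZMod p) ∉ A := by
    rw [hmemA]; simp [hχdef]
  have hnegA : ∀ i : ZMod p, i ∈ A → -i ∉ A := by
    intro i hi
    rw [hmemA] at hi ⊢
    rw [hχneg, hi]
    omega
  -- cardinality
  have hRdef : (Finset.univ.filter (fun x : ZMod p => χ x = 1)).card = A.card := by
    apply Finset.card_bij (fun x _ => -x)
    · intro x hx
      rw [Finset.mem_filter] at hx
      rw [hmemA, hχneg, hx.2]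
    · intro x hx y hy hxy
      simpa using hxy
    · intro y hy
      rw [hmemA] at hy
      refine ⟨-y, ?_, by simp⟩
      rw [Finset.mem_filter, hχneg, hy]
      exact ⟨Finset.mem_univ _, by ring⟩
  have hunion : (Finset.univ.filter (fun x : ZMod p => χ x = 1)) ∪ A = Finset.univ.erase 0 := by
    ext x
    simp only [Finset.mem_union, Finset.mem_filter, Finset.mem_erase, Finset.mem_univ, and_true,
      true_and, hmemA]
    constructor
    · rintro (h | h) <;> rintro rfl <;> simp [hχdef] at h
    · intro hx
      exact quadraticChar_dichotomy hx
  have hdisj : Disjoint (Finset.univ.filter (fun x : ZMod p => χ x = 1)) A := by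
    rw [Finset.disjoint_left]
    intro x hx hx'
    rw [Finset.mem_filter] at hx
    rw [hmemA] at hx'
    omega
  have hcardA : A.card = (p - 1) / 2 := by
    have h1 := Finset.card_union_of_disjoint hdisj
    rw [hunion, hRdef] at h1
    have h2 : (Finset.univ.erase (0 : ZMod p)).card = p - 1 := by
      rw [Finset.card_erase_of_mem (Finset.mem_univ _), Finset.card_univ, hcard]
    omega
  refine ⟨h0A, hnegA, hcardA, ?_⟩
  -- main part
  have hsum0 : ∑ x : ZMod p, χ x = 0 := quadraticChar_sum_zero hchar
  have hsum1 : ∑ x ∈ Finset.univ.erase (1 : ZMod p), χ x = -1 := by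
    have h := Finset.add_sum_erase Finset.univ χ (Finset.mem_univ (1 : ZMod p))
    rw [hsum0] at h
    have h1 : χ 1 = 1 := map_one χ
    omega
  have key : ∀ i : ZMod p, i ≠ 0 → ∑ x : ZMod p, χ x * χ (x + i) = -1 := by
    intro i hi
    have h1 : ∑ x : ZMod p, χ x * χ (x + i)
        = ∑ x ∈ Finset.univ.erase (0 : ZMod p), χ (1 + i * x⁻¹) := by
      rw [← Finset.add_sum_erase Finset.univ _ (Finset.mem_univ (0 : ZMod p))]
      rw [show χ 0 * χ (0 + i) = 0 by simp [hχdef]]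
      rw [zero_add]
      apply Finset.sum_congr rfl
      intro x hx
      have hx0 : x ≠ 0 := (Finset.mem_erase.mp hx).1
      have hfac : x * (x + i) = x ^ 2 * (1 + i * x⁻¹) := by
        field_simp
      rw [← map_mul, hfac, map_mul, quadraticChar_sq_one' hx0, one_mul]
    rw [h1, ← hsum1]
    apply Finset.sum_nbij' (i := fun x => 1 + i * x⁻¹) (j := fun u => i * (u - 1)⁻¹)
    · intro x hx
      have hx0 : x ≠ 0 := (Finset.mem_erase.mp hx).1
      rw [Finset.mem_erase]
      refine ⟨?_, Finset.mem_univ _⟩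
      intro h
      have h' : i * x⁻¹ = 0 := by linear_combination h
      rcases mul_eq_zero.mp h' with h'' | h''
      · exact hi h''
      · exact hx0 (inv_eq_zero.mp h'')
    · intro u hu
      have hu1 : u ≠ 1 := (Finset.mem_erase.mp hu).1
      rw [Finset.mem_erase]
      refine ⟨?_, Finset.mem_univ _⟩
      intro h
      rcases mul_eq_zero.mp h with h' | h'
      · exact hi h'
      · exact hu1 (by
          have h'' := inv_eq_zero.mp h'
          linear_combination h'')
    · intro x hx
      have hx0 : x ≠ 0 := (Finset.mem_erase.mp hx).1
      field_simp
      rw [add_sub_cancel_left, div_self hi]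
    · intro u hu
      have hu1 : u ≠ 1 := (Finset.mem_erase.mp hu).1
      have hu1' : u - 1 ≠ 0 := sub_ne_zero.mpr hu1
      field_simp
      ring
    · intro x hx; rfl
  intro i hi
  have hnegi : (-i : ZMod p) ≠ 0 := neg_ne_zero.mpr hi
  have h0negi : (0 : ZMod p) ≠ -i := fun h => hnegi h.symm
  set S : Finset (ZMod p) := Finset.univ \ {0, -i} with hSdef
  set T : Finset (ZMod p) := S.filter (fun x => χ x = -1 ∧ χ (x + i) = -1) with hTdef
  have hmemS : ∀ x : ZMod p, x ∈ S ↔ x ≠ 0 ∧ x ≠ -i := by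
    intro x
    simp only [hSdef, Finset.mem_sdiff, Finset.mem_univ, true_and, Finset.mem_insert,
      Finset.mem_singleton]
    tauto
  have hPT : P A i = T.card := by
    unfold P
    apply Finset.card_bij (fun q _ => q.1)
    · intro q hq
      rw [Finset.mem_filter, Finset.mem_product] at hq
      obtain ⟨⟨h1, h2⟩, h3⟩ := hq
      rw [hmemA] at h1 h2
      have hq2 : q.2 = q.1 + i := by linear_combination h3
      rw [hTdef, Finset.mem_filter, hmemS]
      refine ⟨⟨?_, ?_⟩, h1, by rw [← hq2]; exact h2⟩
      · intro h
        rw [h] at h1; simp [hχdef] at h1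
      · intro h
        rw [h, show (-i + i : ZMod p) = 0 by ring] at hq2
        rw [hq2] at h2
        simp [hχdef] at h2
    · intro q hq q' hq' hqq
      rw [Finset.mem_filter, Finset.mem_product] at hq hq'
      have h3 := hq.2; have h3' := hq'.2
      have h2 : q.2 = q'.2 := by
        linear_combination h3 - h3' + hqq
      exact Prod.ext hqq h2
    · intro x hx
      rw [hTdef, Finset.mem_filter] at hx
      obtain ⟨hxS, hx1, hx2⟩ := hx
      refine ⟨(x, x + i), ?_, rfl⟩
      rw [Finset.mem_filter, Finset.mem_product]
      exact ⟨⟨(hmemA x).mpr hx1, (hmemA _).mpr hx2⟩, by ring⟩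
  have hScard : S.card = p - 2 := by
    rw [hSdef, Finset.card_sdiff_of_subset (Finset.subset_univ _), Finset.card_univ, hcard,
      Finset.card_insert_of_notMem (by simpa using h0negi), Finset.card_singleton]
  have hpair : ∀ f : ZMod p → ℤ, ∑ x ∈ S, f x = (∑ x : ZMod p, f x) - f 0 - f (-i) := by
    intro f
    rw [hSdef, Finset.sum_sdiff_eq_sub (Finset.subset_univ _), Finset.sum_pair h0negi]
    ring
  have hT4 : ∑ x ∈ S, (1 - χ x) * (1 - χ (x + i)) = 4 * T.card := by
    have e1 : ∑ x ∈ S, (1 - χ x) * (1 - χ (x + i))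
        = ∑ x ∈ S, (if χ x = -1 ∧ χ (x + i) = -1 then (4 : ℤ) else 0) := by
      apply Finset.sum_congr rfl
      intro x hx
      rw [hmemS] at hx
      have hxi0 : x + i ≠ 0 := by
        intro h; exact hx.2 (by linear_combination h)
      rcases quadraticChar_dichotomy hx.1 with h | h <;>
        rcases quadraticChar_dichotomy hxi0 with h' | h' <;>
        rw [h, h'] <;> norm_num
    rw [e1, ← Finset.sum_filter, ← hTdef, Finset.sum_const, nsmul_eq_mul, mul_comm]
  have hsumshift : ∑ x : ZMod p, χ (x + i) = 0 := by
    rw [Fintype.sum_equiv (Equiv.addRight i) (fun x => χ (x + i)) χ (fun x => rfl)]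
    exact hsum0
  have hexp : ∑ x ∈ S, (1 - χ x) * (1 - χ (x + i)) = (p : ℤ) - 3 := by
    have e2 : ∀ x : ZMod p, (1 - χ x) * (1 - χ (x + i))
        = 1 - χ x - χ (x + i) + χ x * χ (x + i) := by intro x; ring
    simp only [e2]
    rw [Finset.sum_add_distrib, Finset.sum_sub_distrib, Finset.sum_sub_distrib]
    rw [Finset.sum_const, hScard, hpair (fun x => χ x), hpair (fun x => χ (x + i)),
      hpair (fun x => χ x * χ (x + i))]
    simp only [hsum0, hsumshift, key i hi]
    rw [hχneg i]
    have hχ0 : χ 0 = 0 := quadraticChar_zero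
    rw [hχ0]
    rw [show (-i + i : ZMod p) = 0 by ring, show ((0 : ZMod p) + i) = i by ring, hχ0]
    have h2p : 2 ≤ p := hp.two_le
    have hc : ((p - 2 : ℕ) : ℤ) = (p : ℤ) - 2 := by omega
    simp only [nsmul_eq_mul, mul_one, zero_mul, mul_zero]
    rw [hc]; ring
  rw [hPT]
  have h4 : (4 : ℤ) * (T.card : ℤ) = (p : ℤ) - 3 := by rw [← hT4, hexp]
  omega
end
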